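/- For every positive integer n, cone(B_+ ∪ B_-) = DD_n: the conical hull of the union of the two SD bases equals the set of diagonally dominant symmetric matrices. -/

import Mathlib

open Matrix Finset

noncomputable section

/-- `e i` is the standard basis vector with a `1` in coordinate `i`. -/
def e {n : ℕ} (i : Fin n) : Fin n → ℝ := Pi.single i 1

/-- The positive semidefinite cone `S^n_+`. -/
def PSDcone (n : ℕ) : Set (Matrix (Fin n) (Fin n) ℝ) :=
  {X | X.IsSymm ∧ ∀ d : Fin n → ℝ, 0 ≤ d ⬝ᵥ X.mulVec d}

/-- The set of diagonally dominant symmetric matrices `DD_n`. -/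
def DD (n : ℕ) : Set (Matrix (Fin n) (Fin n) ℝ) :=
  {A | A.IsSymm ∧ ∀ i, ∑ j ∈ Finset.univ.erase i, |A i j| ≤ A i i}

/-- The set of scaled diagonally dominant symmetric matrices `SDD_n`. -/
def SDD (n : ℕ) : Set (Matrix (Fin n) (Fin n) ℝ) :=
  {A | A.IsSymm ∧ ∃ D : Fin n → ℝ, (∀ i, 0 < D i) ∧
    Matrix.diagonal D * A * Matrix.diagonal D ∈ DD n}

/-- The conical hull of a set of matrices. -/
def coneHull {n : ℕ} (K : Set (Matrix (Fin n) (Fin n) ℝ)) :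
    Set (Matrix (Fin n) (Fin n) ℝ) :=
  {X | ∃ (k : ℕ) (c : Fin k → ℝ) (M : Fin k → Matrix (Fin n) (Fin n) ℝ),
    (∀ i, 0 ≤ c i) ∧ (∀ i, M i ∈ K) ∧ X = ∑ i, c i • M i}

/-- The dual cone within `S^n` w.r.t. the trace inner product. -/
def dualCone {n : ℕ} (K : Set (Matrix (Fin n) (Fin n) ℝ)) :
    Set (Matrix (Fin n) (Fin n) ℝ) :=
  {A | A.IsSymm ∧ ∀ B ∈ K, 0 ≤ Matrix.trace (Aᵀ * B)}

/-- The SD basis of Type I, as a set. -/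
def Bplus (n : ℕ) : Set (Matrix (Fin n) (Fin n) ℝ) :=
  {M | ∃ i j : Fin n, i ≤ j ∧ M = vecMulVec (e i + e j) (e i + e j)}

/-- The SD basis of Type II, as a set. -/
def Bminus (n : ℕ) : Set (Matrix (Fin n) (Fin n) ℝ) :=
  {M | ∃ i : Fin n, M = vecMulVec (e i + e i) (e i + e i)} ∪
    {M | ∃ i j : Fin n, i < j ∧ M = vecMulVec (e i - e j) (e i - e j)}

/-- The expanded SD basis matrix `B̄_{i,j}(α) = (e_i + α e_j)(e_i + α e_j)ᵀ`. -/
def Bbar {n : ℕ} (α : ℝ) (i j : Fin n) : Matrix (Fin n) (Fin n) ℝ :=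
  vecMulVec (e i + α • e j) (e i + α • e j)

/-- The expanded SD basis `B̄(α)`, as a set. -/
def BbarSet (n : ℕ) (α : ℝ) : Set (Matrix (Fin n) (Fin n) ℝ) :=
  {M | ∃ i j : Fin n, i ≤ j ∧ M = Bbar α i j}

/-- The space `S^n` of symmetric matrices as a submodule. -/
def symmSubmodule (n : ℕ) : Submodule ℝ (Matrix (Fin n) (Fin n) ℝ) where
  carrier := {A | A.IsSymm}
  add_mem' := fun {A B} hA hB => by
    simp only [Set.mem_setOf_eq, Matrix.IsSymm, Matrix.transpose_add] at *
    rw [hA, hB]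
  zero_mem' := by simp [Matrix.IsSymm]
  smul_mem' := fun c A hA => by
    simp only [Set.mem_setOf_eq, Matrix.IsSymm, Matrix.transpose_smul] at *
    rw [hA]

/-- Index set for pairs `1 ≤ i ≤ j ≤ n`. -/
abbrev SymIdx (n : ℕ) := {p : Fin n × Fin n // p.1 ≤ p.2}



lemma DD_zero (n : ℕ) : (0 : Matrix (Fin n) (Fin n) ℝ) ∈ DD n := by
  constructor
  · simp [Matrix.IsSymm]
  · intro i; simp

lemma DD_add {n : ℕ} {A B : Matrix (Fin n) (Fin n) ℝ} (hA : A ∈ DD n) (hB : B ∈ DD n) :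
    A + B ∈ DD n := by
  obtain ⟨hA1, hA2⟩ := hA
  obtain ⟨hB1, hB2⟩ := hB
  constructor
  · simp only [Matrix.IsSymm, Matrix.transpose_add] at *; rw [hA1, hB1]
  · intro i
    calc ∑ j ∈ Finset.univ.erase i, |(A + B) i j|
        ≤ ∑ j ∈ Finset.univ.erase i, (|A i j| + |B i j|) := by
          apply Finset.sum_le_sum; intro j _; exact abs_add_le _ _
      _ = (∑ j ∈ Finset.univ.erase i, |A i j|) + ∑ j ∈ Finset.univ.erase i, |B i j| :=
          Finset.sum_add_distrib
      _ ≤ A i i + B i i := add_le_add (hA2 i) (hB2 i)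
      _ = (A + B) i i := rfl

lemma DD_smul {n : ℕ} {c : ℝ} (hc : 0 ≤ c) {A : Matrix (Fin n) (Fin n) ℝ} (hA : A ∈ DD n) :
    c • A ∈ DD n := by
  obtain ⟨hA1, hA2⟩ := hA
  constructor
  · simp only [Matrix.IsSymm, Matrix.transpose_smul] at *; rw [hA1]
  · intro i
    have : ∀ j, |(c • A) i j| = c * |A i j| := by
      intro j; simp [abs_mul, abs_of_nonneg hc]
    simp only [this, ← Finset.mul_sum]
    calc c * ∑ j ∈ Finset.univ.erase i, |A i j| ≤ c * A i i :=
          mul_le_mul_of_nonneg_left (hA2 i) hc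
      _ = (c • A) i i := by simp

lemma u_apply {n : ℕ} (i j b : Fin n) (s : ℝ) :
    (e i + s • e j) b = (if b = i then 1 else 0) + s * (if b = j then 1 else 0) := by
  simp [e, Pi.single_apply]

lemma gen_symm {n : ℕ} (u : Fin n → ℝ) : (vecMulVec u u).IsSymm := by
  ext a b; simp [vecMulVec_apply, mul_comm]

lemma gen_mem_DD {n : ℕ} (i j : Fin n) (s : ℝ) (hs : s = 1 ∨ s = -1) :
    vecMulVec (e i + s • e j) (e i + s • e j) ∈ DD n := by
  set u := e i + s • e j with hu
  have u_ap : ∀ b, u b = (if b = i then 1 else 0) + s * (if b = j then 1 else 0) := by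
    intro b; rw [hu]; exact u_apply i j b s
  have habs : |s| = 1 := by rcases hs with h | h <;> simp [h]
  refine ⟨gen_symm u, ?_⟩
  intro a
  simp only [vecMulVec_apply]
  by_cases hai : a = i
  · by_cases haj : a = j
    · -- a = i = j
      have hz : ∀ b ∈ Finset.univ.erase a, |u a * u b| = 0 := by
        intro b hb
        have hb' : b ≠ a := Finset.ne_of_mem_erase hb
        rw [u_ap b, if_neg (show ¬ b = i by rw [← hai]; exact hb'),
          if_neg (show ¬ b = j by rw [← haj]; exact hb')]
        simp
      rw [Finset.sum_congr rfl hz]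
      simp [mul_self_nonneg]
    · -- a = i ≠ j
      subst hai
      have hua : u a = 1 := by rw [u_ap]; simp [haj, Ne.symm haj]
      have hsum : ∑ b ∈ Finset.univ.erase a, |u a * u b| = 1 := by
        rw [Finset.sum_eq_single_of_mem j (Finset.mem_erase.2 ⟨Ne.symm haj, Finset.mem_univ _⟩)]
        · rw [hua, u_ap, if_neg (Ne.symm haj), if_pos rfl]; simp [habs]
        · intro b hb hbj
          rw [hua, u_ap, if_neg (Finset.ne_of_mem_erase hb), if_neg hbj]; simp
      rw [hsum, hua]; norm_num
  · by_cases haj : a = j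
    · -- a = j ≠ i
      subst haj
      have hua : u a = s := by rw [u_ap]; simp [hai]
      have hsum : ∑ b ∈ Finset.univ.erase a, |u a * u b| = 1 := by
        rw [Finset.sum_eq_single_of_mem i (Finset.mem_erase.2 ⟨Ne.symm hai, Finset.mem_univ _⟩)]
        · rw [hua, u_ap, if_pos rfl, if_neg (Ne.symm hai)]; simp [abs_mul, habs]
        · intro b hb hbi
          rw [hua, u_ap, if_neg hbi, if_neg (Finset.ne_of_mem_erase hb)]; simp
      rw [hsum, hua]
      nlinarith [sq_abs s, habs]
    · -- a ∉ {i,j}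
      have hua : u a = 0 := by rw [u_ap]; simp [hai, haj]
      simp [hua]


lemma vmv_expand {n : ℕ} (i j : Fin n) (s : ℝ) :
    vecMulVec (e i + s • e j) (e i + s • e j) =
      Matrix.single i i 1 + s • Matrix.single i j 1 + s • Matrix.single j i 1
        + (s*s) • Matrix.single j j 1 := by
  ext a b
  simp only [vecMulVec_apply, Pi.add_apply, Pi.smul_apply, e, Pi.single_apply,
    Matrix.add_apply, Matrix.smul_apply, Matrix.single, Matrix.of_apply, smul_eq_mul]
  by_cases h1 : a = i <;> by_cases h2 : a = j <;> by_cases h3 : b = i <;> by_cases h4 : b = j <;>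
    simp_all [eq_comm] <;> ring

noncomputable def rr {n : ℕ} (A : Matrix (Fin n) (Fin n) ℝ) (i : Fin n) : ℝ :=
  ∑ j ∈ Finset.univ.erase i, |A i j|

noncomputable def cc {n : ℕ} (A : Matrix (Fin n) (Fin n) ℝ) (p : Fin n × Fin n) : ℝ :=
  if p.1 < p.2 then |A p.1 p.2| else if p.1 = p.2 then (A p.1 p.1 - rr A p.1)/4 else 0

noncomputable def MM {n : ℕ} (A : Matrix (Fin n) (Fin n) ℝ) (p : Fin n × Fin n) :
    Matrix (Fin n) (Fin n) ℝ :=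
  if p.1 < p.2 then
    (if 0 ≤ A p.1 p.2 then vecMulVec (e p.1 + e p.2) (e p.1 + e p.2)
     else vecMulVec (e p.1 - e p.2) (e p.1 - e p.2))
  else vecMulVec (e p.1 + e p.1) (e p.1 + e p.1)

lemma plus_eq {n : ℕ} (i j : Fin n) : e i + e j = e i + (1:ℝ) • e j := by rw [one_smul]
lemma minus_eq {n : ℕ} (i j : Fin n) : e i - e j = e i + (-1:ℝ) • e j := by
  rw [neg_smul, one_smul, sub_eq_add_neg]

lemma term_eq {n : ℕ} (A : Matrix (Fin n) (Fin n) ℝ) (i j : Fin n) :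
    cc A (i,j) • MM A (i,j) =
      (if i < j then |A i j| • Matrix.single i i (1:ℝ) + A i j • Matrix.single i j (1:ℝ)
          + A i j • Matrix.single j i (1:ℝ) + |A i j| • Matrix.single j j (1:ℝ) else 0)
      + (if i = j then (A i i - rr A i) • Matrix.single i i (1:ℝ) else 0) := by
  rcases lt_trichotomy i j with h | h | h
  · simp only [cc, MM, if_pos h, if_neg (ne_of_lt h), add_zero]
    by_cases h0 : 0 ≤ A i j
    · rw [if_pos h0, plus_eq, vmv_expand, abs_of_nonneg h0]; module
    · rw [if_neg h0, minus_eq, vmv_expand, abs_of_neg (lt_of_not_ge h0)]; module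
  · subst h
    rw [show cc A (i,i) = (A i i - rr A i)/4 by simp [cc],
      show MM A (i,i) = vecMulVec (e i + e i) (e i + e i) by simp [MM],
      if_neg (lt_irrefl i), if_pos rfl, zero_add, plus_eq, vmv_expand]
    module
  · simp only [cc, MM, if_neg (asymm h), if_neg (ne_of_gt h), zero_smul, add_zero]

lemma sum_lt_pair {n : ℕ} {α : Type*} [AddCommMonoid α] (g : Fin n → Fin n → α) :
    ((∑ i, ∑ j, if i < j then g i j else 0) + ∑ i, ∑ j, if i < j then g j i else 0)
      = ∑ i, ∑ j, if i ≠ j then g i j else 0 := by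
  have h : (∑ i, ∑ j, if i < j then g j i else 0)
      = ∑ i, ∑ j, if j < i then g i j else 0 := Finset.sum_comm
  rw [h, ← Finset.sum_add_distrib]
  refine Finset.sum_congr rfl fun i _ => ?_
  rw [← Finset.sum_add_distrib]
  refine Finset.sum_congr rfl fun j _ => ?_
  rcases lt_trichotomy i j with h1 | h1 | h1
  · rw [if_pos h1, if_neg (asymm h1), if_pos (ne_of_lt h1), add_zero]
  · rw [if_neg (h1 ▸ lt_irrefl i), if_neg (h1 ▸ lt_irrefl i), if_neg (by simp [h1]), zero_add]
  · rw [if_neg (asymm h1), if_pos h1, if_pos (ne_of_gt h1), zero_add]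

lemma sum_cM {n : ℕ} (A : Matrix (Fin n) (Fin n) ℝ) (hA : A.IsSymm) :
    ∑ p : Fin n × Fin n, cc A p • MM A p = A := by
  have hs : ∀ i j : Fin n, A j i = A i j := fun i j => hA.apply i j
  rw [Fintype.sum_prod_type]
  calc ∑ i, ∑ j, cc A (i,j) • MM A (i,j)
      = ∑ i, ∑ j,
          ((if i < j then |A i j| • Matrix.single i i (1:ℝ) + A i j • Matrix.single i j (1:ℝ)
            + A i j • Matrix.single j i (1:ℝ) + |A i j| • Matrix.single j j (1:ℝ) else 0)
          + (if i = j then (A i i - rr A i) • Matrix.single i i (1:ℝ) else 0)) :=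
        Finset.sum_congr rfl fun i _ => Finset.sum_congr rfl fun j _ => term_eq A i j
    _ = ((∑ i, ∑ j, if i < j then |A i j| • Matrix.single i i (1:ℝ) else 0)
          + (∑ i, ∑ j, if i < j then A i j • Matrix.single i j (1:ℝ) else 0)
          + (∑ i, ∑ j, if i < j then A i j • Matrix.single j i (1:ℝ) else 0)
          + (∑ i, ∑ j, if i < j then |A i j| • Matrix.single j j (1:ℝ) else 0))
          + ∑ i, (A i i - rr A i) • Matrix.single i i (1:ℝ) := by
        have hpt : ∀ i j : Fin n,
            (if i < j then |A i j| • Matrix.single i i (1:ℝ) + A i j • Matrix.single i j (1:ℝ)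
              + A i j • Matrix.single j i (1:ℝ) + |A i j| • Matrix.single j j (1:ℝ) else 0)
            = (if i < j then |A i j| • Matrix.single i i (1:ℝ) else 0)
              + (if i < j then A i j • Matrix.single i j (1:ℝ) else 0)
              + (if i < j then A i j • Matrix.single j i (1:ℝ) else 0)
              + (if i < j then |A i j| • Matrix.single j j (1:ℝ) else 0) := fun i j => by
          split_ifs <;> simp
        simp only [hpt, Finset.sum_add_distrib, Finset.sum_ite_eq, Finset.mem_univ, if_true]
    _ = ((∑ i, ∑ j, if i ≠ j then |A i j| • Matrix.single i i (1:ℝ) else 0)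
          + (∑ i, ∑ j, if i ≠ j then A i j • Matrix.single i j (1:ℝ) else 0))
          + ∑ i, (A i i - rr A i) • Matrix.single i i (1:ℝ) := by
        have h3 : ∀ i j : Fin n, (if i < j then A i j • Matrix.single j i (1:ℝ) else 0)
            = (if i < j then A j i • Matrix.single j i (1:ℝ) else 0) := fun i j => by
          rw [hs i j]
        have h4 : ∀ i j : Fin n, (if i < j then |A i j| • Matrix.single j j (1:ℝ) else 0)
            = (if i < j then |A j i| • Matrix.single j j (1:ℝ) else 0) := fun i j => by
          rw [hs i j]
        rw [show (∑ i, ∑ j, if i < j then A i j • Matrix.single j i (1:ℝ) else 0)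
            = ∑ i, ∑ j, if i < j then A j i • Matrix.single j i (1:ℝ) else 0 from
          Finset.sum_congr rfl fun i _ => Finset.sum_congr rfl fun j _ => h3 i j]
        rw [show (∑ i, ∑ j, if i < j then |A i j| • Matrix.single j j (1:ℝ) else 0)
            = ∑ i, ∑ j, if i < j then |A j i| • Matrix.single j j (1:ℝ) else 0 from
          Finset.sum_congr rfl fun i _ => Finset.sum_congr rfl fun j _ => h4 i j]
        have e14 : ((∑ i, ∑ j, if i < j then |A i j| • Matrix.single i i (1:ℝ) else 0)
            + ∑ i, ∑ j, if i < j then |A j i| • Matrix.single j j (1:ℝ) else 0)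
            = ∑ i, ∑ j, if i ≠ j then |A i j| • Matrix.single i i (1:ℝ) else 0 :=
          sum_lt_pair fun i j => |A i j| • Matrix.single i i (1:ℝ)
        have e23 : ((∑ i, ∑ j, if i < j then A i j • Matrix.single i j (1:ℝ) else 0)
            + ∑ i, ∑ j, if i < j then A j i • Matrix.single j i (1:ℝ) else 0)
            = ∑ i, ∑ j, if i ≠ j then A i j • Matrix.single i j (1:ℝ) else 0 :=
          sum_lt_pair fun i j => A i j • Matrix.single i j (1:ℝ)
        rw [← e14, ← e23]; abel
    _ = (∑ i, ∑ j, if i ≠ j then A i j • Matrix.single i j (1:ℝ) else 0)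
          + ∑ i, A i i • Matrix.single i i (1:ℝ) := by
        have hr : ∀ i : Fin n, (∑ j, if i ≠ j then |A i j| • Matrix.single i i (1:ℝ) else 0)
            = rr A i • Matrix.single i i (1:ℝ) := by
          intro i
          have hpt : ∀ j : Fin n, (if i ≠ j then |A i j| • Matrix.single i i (1:ℝ) else 0)
              = (if i ≠ j then |A i j| else 0) • Matrix.single i i (1:ℝ) := fun j => by
            split_ifs <;> simp
          rw [Finset.sum_congr rfl fun j _ => hpt j, ← Finset.sum_smul]
          congr 1
          rw [← Finset.sum_filter, Finset.filter_ne]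
          rfl
        have hXD : (∑ i, ∑ j, if i ≠ j then |A i j| • Matrix.single i i (1:ℝ) else 0)
            + (∑ i, (A i i - rr A i) • Matrix.single i i (1:ℝ))
            = ∑ i, A i i • Matrix.single i i (1:ℝ) := by
          rw [show (∑ i, ∑ j, if i ≠ j then |A i j| • Matrix.single i i (1:ℝ) else 0)
              = ∑ i : Fin n, rr A i • Matrix.single i i (1:ℝ) from
            Finset.sum_congr rfl fun i _ => hr i]
          rw [← Finset.sum_add_distrib]
          refine Finset.sum_congr rfl fun i _ => ?_
          rw [← add_smul]
          congr 1
          ring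
        rw [← hXD]; abel
    _ = ∑ i, ∑ j, A i j • Matrix.single i j (1:ℝ) := by
        have hdiag : (∑ i, A i i • Matrix.single i i (1:ℝ))
            = ∑ i, ∑ j, if i = j then A i j • Matrix.single i j (1:ℝ) else 0 := by
          refine Finset.sum_congr rfl fun i _ => ?_
          rw [Finset.sum_ite_eq]
          simp
        rw [hdiag, ← Finset.sum_add_distrib]
        refine Finset.sum_congr rfl fun i _ => ?_
        rw [← Finset.sum_add_distrib]
        refine Finset.sum_congr rfl fun j _ => ?_
        by_cases h : i = j <;> simp [h]
    _ = A := by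
        conv_rhs => rw [matrix_eq_sum_single A]
        refine Finset.sum_congr rfl fun i _ => Finset.sum_congr rfl fun j _ => ?_
        rw [Matrix.smul_single, smul_eq_mul, mul_one]

/-- `cone(B_+ ∪ B_-) = DD_n`. -/
theorem stmt9 (n : ℕ) (hn : 0 < n) :
    coneHull (Bplus n ∪ Bminus n) = DD n := by
  apply Set.eq_of_subset_of_subset
  · -- cone ⊆ DD
    rintro X ⟨k, c, M, hc, hM, rfl⟩
    have hK : ∀ N ∈ Bplus n ∪ Bminus n, N ∈ DD n := by
      rintro N (⟨i, j, hij, rfl⟩ | ⟨i, rfl⟩ | ⟨i, j, hij, rfl⟩)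
      · rw [plus_eq]; exact gen_mem_DD i j 1 (Or.inl rfl)
      · rw [plus_eq]; exact gen_mem_DD i i 1 (Or.inl rfl)
      · rw [minus_eq]; exact gen_mem_DD i j (-1) (Or.inr rfl)
    exact Finset.sum_induction (fun i => c i • M i) (· ∈ DD n)
      (fun _ _ => DD_add) (DD_zero n) (fun i _ => DD_smul (hc i) (hK _ (hM i)))
  · -- DD ⊆ cone
    intro A hA
    refine ⟨n * n, fun t => cc A (finProdFinEquiv.symm t),
      fun t => MM A (finProdFinEquiv.symm t), ?_, ?_, ?_⟩
    · intro t
      show 0 ≤ cc A (finProdFinEquiv.symm t)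
      set p := finProdFinEquiv.symm t
      unfold cc
      split_ifs with h1 h2
      · exact abs_nonneg _
      · exact div_nonneg (sub_nonneg.mpr (hA.2 p.1)) (by norm_num)
      · exact le_refl 0
    · intro t
      show MM A (finProdFinEquiv.symm t) ∈ Bplus n ∪ Bminus n
      set p := finProdFinEquiv.symm t
      unfold MM
      split_ifs with h1 h2
      · exact Or.inl ⟨p.1, p.2, le_of_lt h1, rfl⟩
      · exact Or.inr (Or.inr ⟨p.1, p.2, h1, rfl⟩)
      · exact Or.inr (Or.inl ⟨p.1, rfl⟩)
    · show A = ∑ t : Fin (n * n), cc A (finProdFinEquiv.symm t) • MM A (finProdFinEquiv.symm t)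
      rw [Equiv.sum_comp finProdFinEquiv.symm (fun p => cc A p • MM A p), sum_cM A hA.1]
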